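/- Let X and Y be Hilbert spaces, C ⊆ X a nonempty closed convex set, ψ† ∈ C, and T : X → Y a bounded linear operator satisfying the variational source condition with constant β > 0 and a strictly increasing concave function φ : [0,∞) → [0,∞) with φ(0) = 0. Let (T_n) be bounded linear operators X → Y with ‖T − T_n‖ ≤ η_n, data S_n ∈ Y with ‖S_n − Tψ†‖ ≤ δ_n, and parameters α_n with α_n > η_n². Assume δ_n → 0, η_n → 0, α_n → 0 and (δ_n² + η_n²)/(α_n − η_n²) → 0 as n → ∞. If ψ_n ∈ C minimizes ψ ↦ ‖T_n ψ − S_n‖² + α_n‖ψ‖² over C, then ‖ψ_n − ψ†‖ → 0 as n → ∞. -/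

import Mathlib

open Filter Topology

open scoped RealInnerProductSpace

set_option maxHeartbeats 1600000 in
/-- Convergence of constrained Tikhonov regularization with approximate operators:
under a variational source condition, if `δ_n, η_n, α_n → 0` with `α_n > η_n²` and
`(δ_n² + η_n²)/(α_n − η_n²) → 0`, the regularized minimizers converge to `ψ†`. -/
theorem stmt_3
    {X Y : Type*} [NormedAddCommGroup X] [InnerProductSpace ℝ X] [CompleteSpace X]
    [NormedAddCommGroup Y] [InnerProductSpace ℝ Y] [CompleteSpace Y]
    (C : Set X) (hC_ne : C.Nonempty) (hC_closed : IsClosed C) (hC_conv : Convex ℝ C)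
    (ψdag : X) (hψdag : ψdag ∈ C)
    (T : X →L[ℝ] Y)
    (β : ℝ) (hβ : 0 < β)
    (φ : ℝ → ℝ) (hφ_mono : StrictMonoOn φ (Set.Ici 0))
    (hφ_conc : ConcaveOn ℝ (Set.Ici 0) φ) (hφ0 : φ 0 = 0)
    (hφ_nonneg : ∀ t ≥ 0, 0 ≤ φ t)
    (hvsc : ∀ ψ ∈ C, β * ‖ψ - ψdag‖ ^ 2 ≤ ‖ψ‖ ^ 2 - ‖ψdag‖ ^ 2 + φ (‖T (ψ - ψdag)‖ ^ 2))
    (Tn : ℕ → X →L[ℝ] Y) (ηn : ℕ → ℝ) (hTn : ∀ n, ‖T - Tn n‖ ≤ ηn n)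
    (Sn : ℕ → Y) (δn : ℕ → ℝ) (hSn : ∀ n, ‖Sn n - T ψdag‖ ≤ δn n)
    (αn : ℕ → ℝ) (hαn : ∀ n, (ηn n) ^ 2 < αn n)
    (hδ0 : Tendsto δn atTop (𝓝 0)) (hη0 : Tendsto ηn atTop (𝓝 0))
    (hα0 : Tendsto αn atTop (𝓝 0))
    (hrate : Tendsto (fun n => ((δn n) ^ 2 + (ηn n) ^ 2) / (αn n - (ηn n) ^ 2)) atTop (𝓝 0))
    (ψn : ℕ → X) (hψn_mem : ∀ n, ψn n ∈ C)
    (hψn_min : ∀ n, ∀ ψ ∈ C,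
      ‖Tn n (ψn n) - Sn n‖ ^ 2 + αn n * ‖ψn n‖ ^ 2 ≤
        ‖Tn n ψ - Sn n‖ ^ 2 + αn n * ‖ψ‖ ^ 2) :
    Tendsto (fun n => ‖ψn n - ψdag‖) atTop (𝓝 0) := by
  have hη_nonneg : ∀ n, 0 ≤ ηn n := fun n => (norm_nonneg _).trans (hTn n)
  have hδ_nonneg : ∀ n, 0 ≤ δn n := fun n => (norm_nonneg _).trans (hSn n)
  have hα_pos : ∀ n, 0 < αn n := fun n => lt_of_le_of_lt (sq_nonneg _) (hαn n)
  set B : ℝ := ‖ψdag‖ + 1 with hBdef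
  have hB_nonneg : (0:ℝ) ≤ B := by positivity
  set A : ℕ → ℝ := fun n => ηn n * ‖ψdag‖ + δn n with hAdef
  have hA_nonneg : ∀ n, 0 ≤ A n := fun n =>
    add_nonneg (mul_nonneg (hη_nonneg n) (norm_nonneg _)) (hδ_nonneg n)
  -- bound on the misfit of the comparison point ψdag
  have hmisfit : ∀ n, ‖Tn n ψdag - Sn n‖ ≤ A n := by
    intro n
    have hdecomp : Tn n ψdag - Sn n = -((T - Tn n) ψdag) + (T ψdag - Sn n) := by
      simp only [ContinuousLinearMap.sub_apply]
      abel
    calc ‖Tn n ψdag - Sn n‖ = ‖-((T - Tn n) ψdag) + (T ψdag - Sn n)‖ := by rw [hdecomp]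
      _ ≤ ‖-((T - Tn n) ψdag)‖ + ‖T ψdag - Sn n‖ := norm_add_le _ _
      _ ≤ ηn n * ‖ψdag‖ + δn n := by
          rw [norm_neg]
          gcongr
          · exact ((T - Tn n).le_opNorm ψdag).trans
              (mul_le_mul_of_nonneg_right (hTn n) (norm_nonneg _))
          · rw [norm_sub_rev]; exact hSn n
  -- key minimality inequality
  have hkey : ∀ n, ‖Tn n (ψn n) - Sn n‖ ^ 2 + αn n * ‖ψn n‖ ^ 2 ≤
      (A n) ^ 2 + αn n * ‖ψdag‖ ^ 2 := by
    intro n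
    refine (hψn_min n ψdag hψdag).trans ?_
    exact add_le_add_left (pow_le_pow_left₀ (norm_nonneg _) (hmisfit n) 2) _
  set s : ℕ → ℝ := fun n => (A n) ^ 2 / αn n with hsdef
  have hs_nonneg : ∀ n, 0 ≤ s n := fun n => div_nonneg (sq_nonneg _) (hα_pos n).le
  have hnorm_sq : ∀ n, ‖ψn n‖ ^ 2 ≤ ‖ψdag‖ ^ 2 + s n := by
    intro n
    have h := hkey n
    have h1 : αn n * ‖ψn n‖ ^ 2 ≤ (A n) ^ 2 + αn n * ‖ψdag‖ ^ 2 := by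
      nlinarith [sq_nonneg ‖Tn n (ψn n) - Sn n‖]
    have h2 : ‖ψn n‖ ^ 2 ≤ ((A n) ^ 2 + αn n * ‖ψdag‖ ^ 2) / αn n :=
      (le_div_iff₀ (hα_pos n)).2 (by nlinarith)
    refine h2.trans_eq ?_
    rw [hsdef, add_div, mul_div_cancel_left₀ _ (hα_pos n).ne', add_comm]
  set M : ℝ := ‖ψdag‖ ^ 2 + 1 with hMdef
  have hM_pos : (0:ℝ) < M := by positivity
  have hA2 : ∀ n, (A n) ^ 2 ≤ 2 * M * ((δn n) ^ 2 + (ηn n) ^ 2) := by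
    intro n
    have h1 := sq_nonneg (ηn n * ‖ψdag‖ - δn n)
    have h2 := sq_nonneg (ηn n)
    have h3 := sq_nonneg (δn n)
    have h4 := sq_nonneg ‖ψdag‖
    simp only [hAdef, hMdef]
    nlinarith [sq_nonneg (δn n * ‖ψdag‖)]
  have hs_le : ∀ n, s n ≤ 2 * M * (((δn n) ^ 2 + (ηn n) ^ 2) / (αn n - (ηn n) ^ 2)) := by
    intro n
    rw [show 2 * M * (((δn n) ^ 2 + (ηn n) ^ 2) / (αn n - (ηn n) ^ 2))
        = (2 * M * ((δn n) ^ 2 + (ηn n) ^ 2)) / (αn n - (ηn n) ^ 2) from (mul_div_assoc _ _ _).symm]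
    rw [hsdef]
    rw [div_le_div_iff₀ (hα_pos n) (sub_pos.2 (hαn n))]
    have hA2n := hA2 n
    have hsub : (0:ℝ) < αn n - (ηn n) ^ 2 := sub_pos.2 (hαn n)
    have hN_nonneg : (0:ℝ) ≤ 2 * M * ((δn n) ^ 2 + (ηn n) ^ 2) := by positivity
    nlinarith [mul_le_mul_of_nonneg_right hA2n hsub.le,
      mul_nonneg hN_nonneg (sq_nonneg (ηn n))]
  have hs0 : Tendsto s atTop (𝓝 0) := by
    have hlim : Tendsto (fun n => 2 * M * (((δn n) ^ 2 + (ηn n) ^ 2) / (αn n - (ηn n) ^ 2)))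
        atTop (𝓝 0) := by
      have := hrate.const_mul (2 * M)
      simpa using this
    exact squeeze_zero hs_nonneg hs_le hlim
  -- the data misfit of ψn tends to zero
  set b : ℕ → ℝ := fun n => ‖Tn n (ψn n) - Sn n‖ with hbdef
  have hA0 : Tendsto A atTop (𝓝 0) := by
    have := (hη0.mul_const ‖ψdag‖).add hδ0
    simpa using this
  have hb2 : Tendsto (fun n => (b n) ^ 2) atTop (𝓝 0) := by
    have hub : ∀ n, (b n) ^ 2 ≤ (A n) ^ 2 + αn n * ‖ψdag‖ ^ 2 := by
      intro n
      have h := hkey n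
      nlinarith [mul_nonneg (hα_pos n).le (sq_nonneg ‖ψn n‖)]
    have hlim : Tendsto (fun n => (A n) ^ 2 + αn n * ‖ψdag‖ ^ 2) atTop (𝓝 0) := by
      have h1 : Tendsto (fun n => (A n) ^ 2) atTop (𝓝 0) := by
        have := hA0.pow 2
        simpa using this
      have h2 : Tendsto (fun n => αn n * ‖ψdag‖ ^ 2) atTop (𝓝 0) := by
        have := hα0.mul_const (‖ψdag‖ ^ 2)
        simpa using this
      simpa using h1.add h2
    exact squeeze_zero (fun n => sq_nonneg _) hub hlim
  have hb_nonneg : ∀ n, 0 ≤ b n := fun n => norm_nonneg _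
  have hb0 : Tendsto b atTop (𝓝 0) := by
    have h := (Real.continuous_sqrt.tendsto 0).comp hb2
    have heq : (fun n => Real.sqrt ((b n) ^ 2)) = b :=
      funext fun n => Real.sqrt_sq (hb_nonneg n)
    rw [Function.comp_def] at h
    rw [heq] at h
    simpa using h
  -- eventual bound on ‖ψn n‖
  have hBnd : ∀ᶠ n in atTop, ‖ψn n‖ ≤ B := by
    have h1 : ∀ᶠ n in atTop, s n < 1 := hs0.eventually_lt_const one_pos
    filter_upwards [h1] with n hn
    have h2 := hnorm_sq n
    have h3 : ‖ψn n‖ ^ 2 ≤ B ^ 2 := by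
      have := norm_nonneg ψdag
      nlinarith
    exact (pow_le_pow_iff_left₀ (norm_nonneg _) hB_nonneg two_ne_zero).1 h3
  -- strong convergence of T ψn to T ψdag
  have hT0 : Tendsto (fun n => ‖T (ψn n) - T ψdag‖) atTop (𝓝 0) := by
    have hbound : ∀ᶠ n in atTop, ‖T (ψn n) - T ψdag‖ ≤ ηn n * B + (b n + δn n) := by
      filter_upwards [hBnd] with n hn
      have hdecomp : T (ψn n) - T ψdag
          = (T - Tn n) (ψn n) + ((Tn n (ψn n) - Sn n) + (Sn n - T ψdag)) := by
        simp only [ContinuousLinearMap.sub_apply]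
        abel
      calc ‖T (ψn n) - T ψdag‖
          = ‖(T - Tn n) (ψn n) + ((Tn n (ψn n) - Sn n) + (Sn n - T ψdag))‖ := by rw [hdecomp]
        _ ≤ ‖(T - Tn n) (ψn n)‖ + (‖Tn n (ψn n) - Sn n‖ + ‖Sn n - T ψdag‖) :=
            (norm_add_le _ _).trans (by gcongr; exact norm_add_le _ _)
        _ ≤ ηn n * B + (b n + δn n) := by
            gcongr
            · exact ((T - Tn n).le_opNorm (ψn n)).trans
                (mul_le_mul (hTn n) hn (norm_nonneg _) (hη_nonneg n))
            · exact hSn n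
    have hlim : Tendsto (fun n => ηn n * B + (b n + δn n)) atTop (𝓝 0) := by
      have := (hη0.mul_const B).add (hb0.add hδ0)
      simpa using this
    exact squeeze_zero' (Eventually.of_forall fun n => norm_nonneg _) hbound hlim
  have hTconv : Tendsto (fun n => T (ψn n)) atTop (𝓝 (T ψdag)) :=
    tendsto_iff_norm_sub_tendsto_zero.2 hT0
  -- now suppose the conclusion fails
  by_contra hcon
  rw [Metric.tendsto_atTop] at hcon
  push_neg at hcon
  obtain ⟨ε, hε, hfreq'⟩ := hcon
  have hfreq : ∃ᶠ n in atTop, ε ≤ ‖ψn n - ψdag‖ := by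
    rw [frequently_atTop]
    intro N
    obtain ⟨n, hn, hd⟩ := hfreq' N
    refine ⟨n, hn, ?_⟩
    have : dist ‖ψn n - ψdag‖ 0 = ‖ψn n - ψdag‖ := by
      simp [Real.dist_eq, abs_of_nonneg (norm_nonneg _)]
    linarith [this ▸ hd]
  haveI hFne : NeBot (atTop ⊓ 𝓟 {n | ε ≤ ‖ψn n - ψdag‖}) := frequently_iff_neBot.1 hfreq
  set F : Filter ℕ := atTop ⊓ 𝓟 {n | ε ≤ ‖ψn n - ψdag‖} with hFdef
  let U : Ultrafilter ℕ := Ultrafilter.of F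
  have hUF : ↑U ≤ F := Ultrafilter.of_le F
  have hU_top : (U : Filter ℕ) ≤ atTop := hUF.trans inf_le_left
  have hSmem : {n | ε ≤ ‖ψn n - ψdag‖} ∈ (U : Filter ℕ) :=
    (hUF.trans inf_le_right) (mem_principal_self _)
  have hSev : ∀ᶠ n in ↑U, ε ≤ ‖ψn n - ψdag‖ := hSmem
  have hBndU : ∀ᶠ n in ↑U, ‖ψn n‖ ≤ B := hBnd.filter_mono hU_top
  -- weak limit along the ultrafilter
  have hlim : ∀ y : X, ∃ a : ℝ, Tendsto (fun n => ⟪y, ψn n⟫) ↑U (𝓝 a) := by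
    intro y
    have hev : ∀ᶠ n in ↑U, (fun n => ⟪y, ψn n⟫) n ∈ Set.Icc (-(‖y‖ * B)) (‖y‖ * B) := by
      filter_upwards [hBndU] with n hn
      have h1 : |⟪y, ψn n⟫| ≤ ‖y‖ * ‖ψn n‖ := abs_real_inner_le_norm y (ψn n)
      have h2 : ‖y‖ * ‖ψn n‖ ≤ ‖y‖ * B := mul_le_mul_of_nonneg_left hn (norm_nonneg y)
      have := abs_le.1 (h1.trans h2)
      exact ⟨this.1, this.2⟩
    have hmem : ↑(U.map (fun n => ⟪y, ψn n⟫)) ≤ 𝓟 (Set.Icc (-(‖y‖ * B)) (‖y‖ * B)) := by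
      rw [le_principal_iff, Ultrafilter.mem_coe, Ultrafilter.mem_map]
      exact hev
    obtain ⟨a, _, ha⟩ := isCompact_Icc.ultrafilter_le_nhds _ hmem
    refine ⟨a, ?_⟩
    rwa [Ultrafilter.coe_map] at ha
  choose Lf hLf using hlim
  have hadd : ∀ y z : X, Lf (y + z) = Lf y + Lf z := by
    intro y z
    have h1 : Tendsto (fun n => ⟪y + z, ψn n⟫) ↑U (𝓝 (Lf y + Lf z)) := by
      have := (hLf y).add (hLf z)
      simpa [inner_add_left] using this
    exact tendsto_nhds_unique (hLf (y + z)) h1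
  have hsmul : ∀ (c : ℝ) (y : X), Lf (c • y) = c * Lf y := by
    intro c y
    have h1 : Tendsto (fun n => ⟪c • y, ψn n⟫) ↑U (𝓝 (c * Lf y)) := by
      have := (hLf y).const_mul c
      simpa [real_inner_smul_left] using this
    exact tendsto_nhds_unique (hLf (c • y)) h1
  have hbound : ∀ y : X, ‖Lf y‖ ≤ B * ‖y‖ := by
    intro y
    rw [Real.norm_eq_abs]
    have h1 : Tendsto (fun n => |⟪y, ψn n⟫|) ↑U (𝓝 |Lf y|) := (hLf y).abs
    refine le_of_tendsto h1 ?_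
    filter_upwards [hBndU] with n hn
    calc |⟪y, ψn n⟫| ≤ ‖y‖ * ‖ψn n‖ := abs_real_inner_le_norm y (ψn n)
      _ ≤ ‖y‖ * B := mul_le_mul_of_nonneg_left hn (norm_nonneg y)
      _ = B * ‖y‖ := mul_comm _ _
  let Lmap : X →L[ℝ] ℝ :=
    LinearMap.mkContinuous
      { toFun := Lf
        map_add' := hadd
        map_smul' := by intro c y; simpa [smul_eq_mul] using hsmul c y } B hbound
  obtain ⟨xs, hxs⟩ : ∃ x : X, ∀ y : X, ⟪x, y⟫ = Lf y :=
    ⟨(InnerProductSpace.toDual ℝ X).symm Lmap, fun y => InnerProductSpace.toDual_symm_apply⟩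
  have hconv : ∀ y : X, Tendsto (fun n => ⟪y, ψn n⟫) ↑U (𝓝 ⟪xs, y⟫) := by
    intro y
    rw [hxs y]
    exact hLf y
  -- xs belongs to C
  have hxsC : xs ∈ C := by
    obtain ⟨c, hcC, hc⟩ :=
      exists_norm_eq_iInf_of_complete_convex hC_ne hC_closed.isComplete hC_conv xs
    have hchar := (norm_eq_iInf_iff_real_inner_le_zero hC_conv hcC).1 hc
    have h1 : ∀ n, ⟪xs - c, ψn n⟫ - ⟪xs - c, c⟫ ≤ 0 := by
      intro n
      have := hchar (ψn n) (hψn_mem n)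
      rwa [inner_sub_right] at this
    have h2 : Tendsto (fun n => ⟪xs - c, ψn n⟫ - ⟪xs - c, c⟫) ↑U
        (𝓝 (⟪xs, xs - c⟫ - ⟪xs - c, c⟫)) := (hconv (xs - c)).sub_const _
    have h3 : ⟪xs, xs - c⟫ - ⟪xs - c, c⟫ ≤ 0 :=
      le_of_tendsto h2 (Eventually.of_forall h1)
    have h4 : ⟪xs - c, xs - c⟫ ≤ 0 := by
      have hcomm : ⟪xs, xs - c⟫ = ⟪xs - c, xs⟫ := real_inner_comm _ _
      have hexp : ⟪xs - c, xs - c⟫ = ⟪xs - c, xs⟫ - ⟪xs - c, c⟫ := inner_sub_right _ _ _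
      linarith
    have h5 : xs - c = 0 := real_inner_self_nonpos.1 h4
    have : xs = c := by rwa [sub_eq_zero] at h5
    rw [this]; exact hcC
  -- T xs = T ψdag
  have hTxs : T xs = T ψdag := by
    set y : Y := T xs - T ψdag with hydef
    have l1 : Tendsto (fun n => ⟪y, T (ψn n)⟫) ↑U (𝓝 ⟪xs, (ContinuousLinearMap.adjoint T) y⟫) := by
      have h := hconv ((ContinuousLinearMap.adjoint T) y)
      have heq : (fun n => ⟪(ContinuousLinearMap.adjoint T) y, ψn n⟫)
          = fun n => ⟪y, T (ψn n)⟫ := by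
        funext n
        exact ContinuousLinearMap.adjoint_inner_left T (ψn n) y
      rwa [heq] at h
    have l2 : Tendsto (fun n => ⟪y, T (ψn n)⟫) ↑U (𝓝 ⟪y, T ψdag⟫) :=
      tendsto_const_nhds.inner (hTconv.mono_left hU_top)
    have heq2 : ⟪xs, (ContinuousLinearMap.adjoint T) y⟫ = ⟪y, T ψdag⟫ :=
      tendsto_nhds_unique l1 l2
    have heq3 : ⟪xs, (ContinuousLinearMap.adjoint T) y⟫ = ⟪y, T xs⟫ := by
      rw [real_inner_comm]
      exact ContinuousLinearMap.adjoint_inner_left T xs y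
    have h6 : ⟪y, y⟫ = 0 := by
      rw [hydef, inner_sub_right]
      rw [heq3] at heq2
      linarith [heq2]
    have : y = 0 := inner_self_eq_zero.1 h6
    rw [hydef] at this
    exact sub_eq_zero.1 this
  -- norm bound on xs
  have hxs_norm : ‖xs‖ ^ 2 ≤ ‖ψdag‖ ^ 2 := by
    have hub : ∀ n, ⟪xs, ψn n⟫ ≤ (‖xs‖ ^ 2 + ‖ψdag‖ ^ 2 + s n) / 2 := by
      intro n
      have h1 : ⟪xs, ψn n⟫ ≤ ‖xs‖ * ‖ψn n‖ := real_inner_le_norm xs (ψn n)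
      have h2 := hnorm_sq n
      nlinarith [sq_nonneg (‖xs‖ - ‖ψn n‖)]
    have hl : Tendsto (fun n => ⟪xs, ψn n⟫) ↑U (𝓝 (‖xs‖ ^ 2)) := by
      have := hconv xs
      rwa [real_inner_self_eq_norm_sq] at this
    have hr : Tendsto (fun n => (‖xs‖ ^ 2 + ‖ψdag‖ ^ 2 + s n) / 2) ↑U
        (𝓝 ((‖xs‖ ^ 2 + ‖ψdag‖ ^ 2 + 0) / 2)) :=
      ((tendsto_const_nhds.add (hs0.mono_left hU_top)).div_const 2)
    have := le_of_tendsto_of_tendsto' hl hr hub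
    linarith
  -- VSC forces xs = ψdag
  have hxs_eq : xs = ψdag := by
    have hv := hvsc xs hxsC
    have hz : T (xs - ψdag) = 0 := by
      rw [map_sub, hTxs, sub_self]
    rw [hz] at hv
    simp only [norm_zero] at hv
    rw [show (0:ℝ) ^ 2 = 0 by norm_num, hφ0] at hv
    have h7 : ‖xs - ψdag‖ ^ 2 ≤ 0 := by nlinarith [sq_nonneg ‖xs - ψdag‖]
    have h8 : ‖xs - ψdag‖ = 0 := by nlinarith [norm_nonneg (xs - ψdag)]
    have := norm_eq_zero.1 h8
    rwa [sub_eq_zero] at this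
  -- strong convergence along U : contradiction
  have hgoal : Tendsto (fun n => s n + 2 * ‖ψdag‖ ^ 2 - 2 * ⟪ψdag, ψn n⟫) ↑U (𝓝 0) := by
    have h1 : Tendsto (fun n => ⟪ψdag, ψn n⟫) ↑U (𝓝 (‖ψdag‖ ^ 2)) := by
      have := hconv ψdag
      rwa [hxs_eq, real_inner_self_eq_norm_sq] at this
    have h2 := ((hs0.mono_left hU_top).add_const (2 * ‖ψdag‖ ^ 2)).sub (h1.const_mul 2)
    have : (0 : ℝ) + 2 * ‖ψdag‖ ^ 2 - 2 * ‖ψdag‖ ^ 2 = 0 := by ring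
    rwa [this] at h2
  have hbd : ∀ n, ‖ψn n - ψdag‖ ^ 2 ≤ s n + 2 * ‖ψdag‖ ^ 2 - 2 * ⟪ψdag, ψn n⟫ := by
    intro n
    have h1 := norm_sub_sq_real (ψn n) ψdag
    have h2 := hnorm_sq n
    have h3 : ⟪ψn n, ψdag⟫ = ⟪ψdag, ψn n⟫ := real_inner_comm _ _
    nlinarith
  have hlt : ∀ᶠ n in ↑U, ‖ψn n - ψdag‖ ^ 2 < ε ^ 2 := by
    have h1 : ∀ᶠ n in ↑U, s n + 2 * ‖ψdag‖ ^ 2 - 2 * ⟪ψdag, ψn n⟫ < ε ^ 2 :=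
      hgoal.eventually_lt_const (by positivity)
    filter_upwards [h1] with n hn
    exact lt_of_le_of_lt (hbd n) hn
  obtain ⟨n, h1, h2⟩ := (hlt.and hSev).exists
  have h3 : ε ^ 2 ≤ ‖ψn n - ψdag‖ ^ 2 := pow_le_pow_left₀ hε.le h2 2
  linarith
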